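/- Let T (ground-truth category) and C (cluster assignment) be discrete random variables on a finite probability space. Define the clustering error C_e := 1 − Σ_k max_t P(T = t, C = k). Then C_e ≤ 1 − exp(−H(T | C)). -/

import Mathlib

open Finset Real
open scoped Classical

noncomputable section

/-- Probability of an event on a finite space with pmf `p`. -/
def pr {Ω : Type*} [Fintype Ω] (p : Ω → ℝ) (E : Ω → Prop) : ℝ :=
  ∑ ω, if E ω then p ω else 0

/-- Conditional probability `P(A | B)`. -/
def cpr {Ω : Type*} [Fintype Ω] (p : Ω → ℝ) (A B : Ω → Prop) : ℝ :=
  pr p (fun ω => A ω ∧ B ω) / pr p B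

/-- Shannon entropy (nats) of a random variable `T`. -/
def entH {Ω α : Type*} [Fintype Ω] [Fintype α] (p : Ω → ℝ) (T : Ω → α) : ℝ :=
  -∑ t, pr p (fun ω => T ω = t) * Real.log (pr p (fun ω => T ω = t))

/-- Entropy of the conditional distribution of `T` given `Z = z`. -/
def condEntAt {Ω α β : Type*} [Fintype Ω] [Fintype α] (p : Ω → ℝ) (T : Ω → α)
    (Z : Ω → β) (z : β) : ℝ :=
  -∑ t, cpr p (fun ω => T ω = t) (fun ω => Z ω = z) *
      Real.log (cpr p (fun ω => T ω = t) (fun ω => Z ω = z))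

/-- Conditional Shannon entropy `H(T | Z)`. -/
def condEntH {Ω α β : Type*} [Fintype Ω] [Fintype α] [Fintype β] (p : Ω → ℝ) (T : Ω → α)
    (Z : Ω → β) : ℝ :=
  ∑ z, pr p (fun ω => Z ω = z) * condEntAt p T Z z

/-- Mutual information `I(T; V)` (nats), with the convention `0 log 0 = 0`. -/
def mi {Ω α β : Type*} [Fintype Ω] [Fintype α] [Fintype β] (p : Ω → ℝ) (T : Ω → α)
    (V : Ω → β) : ℝ :=
  ∑ t, ∑ v,
    pr p (fun ω => T ω = t ∧ V ω = v) *
      Real.log (pr p (fun ω => T ω = t ∧ V ω = v) /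
        (pr p (fun ω => T ω = t) * pr p (fun ω => V ω = v)))

/-- Conditional mutual information `I(C; X | V) = H(C|V) - H(C | (X,V))`. -/
def cmi {Ω α β γ : Type*} [Fintype Ω] [Fintype α] [Fintype β] [Fintype γ]
    (p : Ω → ℝ) (C : Ω → α) (X : Ω → β) (V : Ω → γ) : ℝ :=
  condEntH p C V - condEntH p C (fun ω => (X ω, V ω))

section Aux

variable {Ω : Type*} [Fintype Ω]

lemma pr_nonneg (p : Ω → ℝ) (hp : ∀ ω, 0 ≤ p ω) (E : Ω → Prop) : 0 ≤ pr p E := by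
  apply Finset.sum_nonneg
  intro ω _
  split <;> simp [hp ω]

lemma sum_pr_fiber {β : Type*} [Fintype β] (p : Ω → ℝ) (f : Ω → β) :
    ∑ b, pr p (fun ω => f ω = b) = ∑ ω, p ω := by
  unfold pr
  rw [Finset.sum_comm]
  refine Finset.sum_congr rfl fun ω _ => ?_
  simp

lemma sum_joint {α β : Type*} [Fintype α] (p : Ω → ℝ) (T : Ω → α) (C : Ω → β) (k : β) :
    ∑ t, pr p (fun ω => T ω = t ∧ C ω = k) = pr p (fun ω => C ω = k) := by
  unfold pr
  rw [Finset.sum_comm]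
  refine Finset.sum_congr rfl fun ω _ => ?_
  by_cases h : C ω = k <;> simp [h]

/-- For a probability vector `q`, `exp (∑ q t * log (q t)) ≤ sup q`. -/
lemma exp_sum_log_le_sup {α : Type*} [Fintype α] [Nonempty α] (q : α → ℝ)
    (hq : ∀ t, 0 ≤ q t) (hq1 : ∑ t, q t = 1) :
    Real.exp (∑ t, q t * Real.log (q t)) ≤ Finset.univ.sup' Finset.univ_nonempty q := by
  set M := Finset.univ.sup' Finset.univ_nonempty q with hM
  have hMpos : 0 < M := by
    by_contra h
    push_neg at h
    have : ∑ t, q t ≤ 0 := Finset.sum_nonpos fun t _ =>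
      le_trans (Finset.le_sup' q (Finset.mem_univ t)) h
    linarith
  have hle : ∑ t, q t * Real.log (q t) ≤ Real.log M := by
    calc ∑ t, q t * Real.log (q t) ≤ ∑ t, q t * Real.log M := by
          refine Finset.sum_le_sum fun t _ => ?_
          rcases eq_or_lt_of_le (hq t) with h | h
          · simp [← h]
          · exact mul_le_mul_of_nonneg_left
              (Real.log_le_log h (Finset.le_sup' q (Finset.mem_univ t))) (hq t)
      _ = Real.log M := by rw [← Finset.sum_mul, hq1, one_mul]
  calc Real.exp (∑ t, q t * Real.log (q t)) ≤ Real.exp (Real.log M) := Real.exp_le_exp.2 hle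
    _ = M := Real.exp_log hMpos

end Aux

/-- Clustering error bound: `C_e := 1 - Σ_k max_t P(T=t, C=k) ≤ 1 - exp(-H(T|C))`. -/
theorem clustering_error_le {Ω 𝒯 𝒦 : Type*} [Fintype Ω] [Fintype 𝒯] [Fintype 𝒦] [Nonempty 𝒯]
    (p : Ω → ℝ) (hp : ∀ ω, 0 ≤ p ω) (hsum : ∑ ω, p ω = 1)
    (T : Ω → 𝒯) (C : Ω → 𝒦) :
    1 - ∑ k, Finset.univ.sup' Finset.univ_nonempty
        (fun t => pr p (fun ω => T ω = t ∧ C ω = k)) ≤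
      1 - Real.exp (-(condEntH p T C)) := by
  have hsup : Real.exp (-(condEntH p T C)) ≤
      ∑ k, Finset.univ.sup' Finset.univ_nonempty
        (fun t => pr p (fun ω => T ω = t ∧ C ω = k)) := by
    set w : 𝒦 → ℝ := fun k => pr p (fun ω => C ω = k) with hw
    have hw0 : ∀ k, 0 ≤ w k := fun k => pr_nonneg p hp _
    have hw1 : ∑ k, w k = 1 := by rw [hw]; simpa [hsum] using sum_pr_fiber p C
    have hneg : -(condEntH p T C) = ∑ k, w k • (-(condEntAt p T C k)) := by
      simp [condEntH, ← Finset.sum_neg_distrib, mul_comm, smul_eq_mul, mul_neg]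
      rfl
    have hjensen := convexOn_exp.map_sum_le (t := Finset.univ)
      (w := w) (p := fun k => -(condEntAt p T C k))
      (fun k _ => hw0 k) hw1 (fun k _ => Set.mem_univ _)
    rw [hneg]
    refine le_trans hjensen (Finset.sum_le_sum fun k _ => ?_)
    rcases eq_or_lt_of_le (hw0 k) with h0 | h0
    · have hzero : ∀ t, pr p (fun ω => T ω = t ∧ C ω = k) = 0 := by
        intro t
        have h1 : pr p (fun ω => T ω = t ∧ C ω = k) ≤ w k := by
          show _ ≤ pr p (fun ω => C ω = k)
          rw [← sum_joint p T C k]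
          exact Finset.single_le_sum (f := fun t => pr p (fun ω => T ω = t ∧ C ω = k))
            (fun t _ => pr_nonneg p hp _) (Finset.mem_univ t)
        have := pr_nonneg p hp (fun ω => T ω = t ∧ C ω = k)
        linarith [h0.symm ▸ h1]
      obtain ⟨t0⟩ := ‹Nonempty 𝒯›
      have : (0:ℝ) ≤ Finset.univ.sup' Finset.univ_nonempty
          (fun t => pr p (fun ω => T ω = t ∧ C ω = k)) := by
        refine le_trans ?_ (Finset.le_sup' _ (Finset.mem_univ t0))
        simp [hzero t0]
      simpa [← h0] using this
    · -- positive weight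
      set q : 𝒯 → ℝ := fun t => cpr p (fun ω => T ω = t) (fun ω => C ω = k) with hq
      have hqdef : ∀ t, q t = pr p (fun ω => T ω = t ∧ C ω = k) / w k := fun t => rfl
      have hq0 : ∀ t, 0 ≤ q t := fun t =>
        div_nonneg (pr_nonneg p hp _) (hw0 k)
      have hq1 : ∑ t, q t = 1 := by
        simp only [hqdef, ← Finset.sum_div, sum_joint p T C k]
        exact div_self (ne_of_gt h0)
      have hent : -(condEntAt p T C k) = ∑ t, q t * Real.log (q t) := by
        simp [condEntAt, hq]
      show w k * Real.exp (-(condEntAt p T C k)) ≤ _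
      rw [hent]
      have hb := exp_sum_log_le_sup q hq0 hq1
      obtain ⟨t1, -, ht1⟩ := Finset.exists_mem_eq_sup' (Finset.univ_nonempty) q
      have : w k * Real.exp (∑ t, q t * Real.log (q t)) ≤ w k * q t1 := by
        rw [← ht1]
        exact mul_le_mul_of_nonneg_left hb (hw0 k)
      refine le_trans (by simpa [smul_eq_mul] using this) ?_
      have : w k * q t1 = pr p (fun ω => T ω = t1 ∧ C ω = k) := by
        rw [hqdef t1, mul_div_cancel₀]
        exact ne_of_gt h0
      rw [this]
      exact Finset.le_sup' (fun t => pr p (fun ω => T ω = t ∧ C ω = k)) (Finset.mem_univ t1)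
  linarith
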